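/- Under the homogeneous Dawid–Skene model with constant assignment probability q, an infinite sequence of workers, and majority voting using the first M workers: if lim_{M→∞} (1/M)·Σ_{i=1}^M w_i exists and is strictly greater than 1/L, then majority voting is consistent, i.e., for every item j, P(ŷ_j^(M) ≠ y_j) → 0 as M → ∞ (ŷ_j^(M) converges to y_j in probability). -/

import Mathlib

open MeasureTheory ProbabilityTheory Real Filter

noncomputable section

namespace CrowdSeq

/-- Conditional law of `Z i j ∈ Fin (L+1)` (`0` = missing) given the true label `y j = k`
under the homogeneous Dawid–Skene model with constant assignment probability `q` and an
infinite sequence of worker accuracies `w`. -/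
def condLaw {L : ℕ} (q : ℝ) (w : ℕ → ℝ) (i : ℕ) (k : Fin L) (h : Fin (L + 1)) : ℝ :=
  if hz : h = 0 then 1 - q
  else q * (if h.pred hz = k then w i else (1 - w i) / ((L : ℝ) - 1))

end CrowdSeq

namespace CrowdAux

open Finset

/-- Sum of an `ite` over `Fin L`. -/
lemma sum_ite_fin {L : ℕ} (k : Fin L) (a b : ℝ) :
    ∑ g : Fin L, (if g = k then a else b) = a + ((L : ℝ) - 1) * b := by
  have h : ∀ g : Fin L, (if g = k then a else b) = (if g = k then a - b else 0) + b := by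
    intro g; split <;> ring
  rw [Finset.sum_congr rfl fun g _ => h g, Finset.sum_add_distrib,
    Finset.sum_ite_eq' Finset.univ k (fun _ => a - b), Finset.sum_const]
  simp only [Finset.mem_univ, if_true, Finset.card_univ, Fintype.card_fin, nsmul_eq_mul]
  ring

lemma condLaw_nonneg {L : ℕ} {q : ℝ} {w : ℕ → ℝ} (hL : 2 ≤ L) (hq0 : 0 < q) (hq1 : q ≤ 1)
    (hw0 : ∀ i, 0 ≤ w i) (hw1 : ∀ i, w i ≤ 1) (i : ℕ) (k : Fin L) (z : Fin (L + 1)) :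
    0 ≤ CrowdSeq.condLaw q w i k z := by
  have hL1 : (1 : ℝ) ≤ (L : ℝ) - 1 := by
    have : (2 : ℝ) ≤ (L : ℝ) := by exact_mod_cast hL
    linarith
  unfold CrowdSeq.condLaw
  split
  · linarith
  · have := hw0 i; have := hw1 i
    split
    · positivity
    · have : 0 ≤ (1 - w i) / ((L : ℝ) - 1) := div_nonneg (by linarith) (by linarith)
      positivity

lemma condLaw_sum_one {L : ℕ} {q : ℝ} {w : ℕ → ℝ} (hL : 2 ≤ L)
    (hw0 : ∀ i, 0 ≤ w i) (hw1 : ∀ i, w i ≤ 1) (i : ℕ) (k : Fin L) :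
    ∑ z : Fin (L + 1), CrowdSeq.condLaw q w i k z = 1 := by
  have hL1 : (1 : ℝ) ≤ (L : ℝ) - 1 := by
    have : (2 : ℝ) ≤ (L : ℝ) := by exact_mod_cast hL
    linarith
  have hLne : ((L : ℝ) - 1) ≠ 0 := by linarith
  rw [Fin.sum_univ_succ]
  have h0 : CrowdSeq.condLaw q w i k 0 = 1 - q := by simp [CrowdSeq.condLaw]
  have hsucc : ∀ g : Fin L, CrowdSeq.condLaw q w i k g.succ
      = q * (if g = k then w i else (1 - w i) / ((L : ℝ) - 1)) := by
    intro g
    simp [CrowdSeq.condLaw, Fin.succ_ne_zero, Fin.pred_succ]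
  rw [h0, Finset.sum_congr rfl fun g _ => hsucc g, ← Finset.mul_sum, sum_ite_fin]
  field_simp
  ring

/-- Variance of a sum of independent centered variables on a finite product space. -/
lemma var_sum {M : ℕ} {α : Type*} [Fintype α] (p f : Fin M → α → ℝ)
    (hp1 : ∀ i, ∑ z, p i z = 1) (hf0 : ∀ i, ∑ z, p i z * f i z = 0) :
    ∑ v : Fin M → α, (∏ i, p i (v i)) * (∑ i, f i (v i)) ^ 2
      = ∑ i, ∑ z, p i z * f i z ^ 2 := by
  classical
  have key : ∀ a b : Fin M,
      (∑ v : Fin M → α, (∏ i, p i (v i)) * (f a (v a) * f b (v b)))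
        = if a = b then ∑ z, p a z * f a z ^ 2 else 0 := by
    intro a b
    have hg : ∀ v : Fin M → α, (∏ i, p i (v i)) * (f a (v a) * f b (v b))
        = ∏ i, (p i (v i) * (if i = a then f a (v i) else 1)
            * (if i = b then f b (v i) else 1)) := by
      intro v
      rw [Finset.prod_mul_distrib, Finset.prod_mul_distrib,
        Finset.prod_ite_eq' Finset.univ a (fun i => f a (v i)),
        Finset.prod_ite_eq' Finset.univ b (fun i => f b (v i))]
      simp only [Finset.mem_univ, if_true]
      ring
    rw [Finset.sum_congr rfl fun v _ => hg v, ← Fintype.prod_sum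
      (fun i z => p i z * (if i = a then f a z else 1) * (if i = b then f b z else 1))]
    by_cases hab : a = b
    · subst hab
      rw [if_pos rfl]
      rw [Finset.prod_eq_single a]
      · apply Finset.sum_congr rfl
        intro z _
        simp [sq]; ring
      · intro i _ hi
        simp only [if_neg hi, mul_one]
        exact hp1 i
      · simp
    · rw [if_neg hab]
      apply Finset.prod_eq_zero (Finset.mem_univ a)
      have : ∀ z, p a z * (if a = a then f a z else 1) * (if a = b then f b z else 1)
          = p a z * f a z := by
        intro z; simp [hab]
      rw [Finset.sum_congr rfl fun z _ => this z]
      exact hf0 a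
  have expand : ∀ v : Fin M → α, (∏ i, p i (v i)) * (∑ i, f i (v i)) ^ 2
      = ∑ a : Fin M, ∑ b : Fin M, (∏ i, p i (v i)) * (f a (v a) * f b (v b)) := by
    intro v
    rw [sq, Finset.sum_mul_sum]
    rw [Finset.mul_sum]
    apply Finset.sum_congr rfl
    intro a _
    rw [Finset.mul_sum]
  rw [Finset.sum_congr rfl fun v _ => expand v]
  rw [Finset.sum_comm]
  have : ∀ a : Fin M,
      (∑ v : Fin M → α, ∑ b : Fin M, (∏ i, p i (v i)) * (f a (v a) * f b (v b)))
        = ∑ z, p a z * f a z ^ 2 := by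
    intro a
    rw [Finset.sum_comm]
    rw [Finset.sum_congr rfl fun b _ => key a b]
    simp
  exact Finset.sum_congr rfl fun a _ => this a

end CrowdAux

set_option maxHeartbeats 1000000 in
/-- Under the homogeneous Dawid–Skene model with constant assignment
probability `q`, an infinite sequence of workers, and majority voting using the first `M`
workers: if `lim_M (1/M)Σ_{i<M} w_i` exists and exceeds `1/L`, then majority voting is
consistent: for every item `j`, `P(ŷ_j^(M) ≠ y_j) → 0` as `M → ∞`. -/
theorem mv_consistent
    {Ω : Type*} [MeasurableSpace Ω] (μ : Measure Ω) [IsProbabilityMeasure μ]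
    {N L : ℕ} (hN : 0 < N) (hL : 2 ≤ L)
    (y : Fin N → Ω → Fin L) (Z : ℕ → Fin N → Ω → Fin (L + 1))
    (hym : ∀ j, Measurable (y j)) (hZm : ∀ i j, Measurable (Z i j))
    (pri : Fin L → ℝ) (q : ℝ) (w : ℕ → ℝ)
    (hpri : ∀ k, 0 ≤ pri k) (hq0 : 0 < q) (hq1 : q ≤ 1)
    (hw0 : ∀ i, 0 ≤ w i) (hw1 : ∀ i, w i ≤ 1)
    (hprior : ∀ (j : Fin N) (k : Fin L), (μ {ω | y j ω = k}).toReal = pri k)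
    (hlaw : ∀ (j : Fin N) (k : Fin L) (M : ℕ) (h : ℕ → Fin (L + 1)),
      (μ {ω | y j ω = k ∧ ∀ i < M, Z i j ω = h i}).toReal
        = pri k * ∏ i ∈ Finset.range M, CrowdSeq.condLaw q w i k (h i))
    (hindep : iIndepFun
      (fun j ω => (y j ω, fun i : ℕ => Z i j ω)) μ)
    (yhatM : ℕ → Fin N → Ω → Fin L) (hyhatm : ∀ M j, Measurable (yhatM M j))
    (hyhat : ∀ (M : ℕ) (j : Fin N) (ω : Ω) (k : Fin L),
      (∑ i ∈ Finset.range M, if Z i j ω = k.succ then (1 : ℝ) else 0)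
        ≤ ∑ i ∈ Finset.range M, if Z i j ω = (yhatM M j ω).succ then (1 : ℝ) else 0)
    (wlim : ℝ)
    (hwlim : Tendsto (fun M : ℕ => (M : ℝ)⁻¹ * ∑ i ∈ Finset.range M, w i)
      atTop (nhds wlim))
    (hwgt : 1 / (L : ℝ) < wlim) :
    ∀ j : Fin N,
      Tendsto (fun M : ℕ => (μ {ω | yhatM M j ω ≠ y j ω}).toReal) atTop (nhds 0) := by
  classical
  intro j
  have hL1 : (1 : ℝ) ≤ (L : ℝ) - 1 := by
    have : (2 : ℝ) ≤ (L : ℝ) := by exact_mod_cast hL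
    linarith
  have hLne : ((L : ℝ) - 1) ≠ 0 := by linarith
  have hLpos : (0 : ℝ) < L := by linarith
  -- abbreviations
  set mi : ℕ → ℝ := fun i => q * w i - q * (1 - w i) / ((L : ℝ) - 1) with hmi_def
  set mM : ℕ → ℝ := fun M => ∑ i ∈ Finset.range M, mi i with hmM_def
  set A : ℕ → ℝ := fun M => ∑ i ∈ Finset.range M, w i with hA_def
  -- prior bound
  have hpri_le_one : ∀ k : Fin L, pri k ≤ 1 := by
    intro k
    rw [← hprior j k]
    have h1 : μ {ω | y j ω = k} ≤ 1 := prob_le_one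
    calc (μ {ω | y j ω = k}).toReal ≤ (1 : ENNReal).toReal :=
          ENNReal.toReal_mono (by simp) h1
      _ = 1 := by simp
  -- X variable
  set X : Fin L → Fin L → Fin (L + 1) → ℝ := fun k h z =>
    (if z = k.succ then (1 : ℝ) else 0) - (if z = h.succ then (1 : ℝ) else 0) with hX_def
  have hXbd : ∀ k h z, -1 ≤ X k h z ∧ X k h z ≤ 1 := by
    intro k h z
    simp only [hX_def]
    constructor <;> (split <;> split <;> norm_num)
  -- condLaw at succ
  have hcl_succ : ∀ (i : ℕ) (k g : Fin L), CrowdSeq.condLaw q w i k g.succ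
      = q * (if g = k then w i else (1 - w i) / ((L : ℝ) - 1)) := by
    intro i k g
    simp [CrowdSeq.condLaw, Fin.succ_ne_zero, Fin.pred_succ]
  -- mean identity
  have hmean : ∀ (i : ℕ) (k h : Fin L), k ≠ h →
      ∑ z : Fin (L + 1), CrowdSeq.condLaw q w i k z * X k h z = mi i := by
    intro i k h hkh
    have : ∀ z : Fin (L + 1), CrowdSeq.condLaw q w i k z * X k h z
        = (if z = k.succ then CrowdSeq.condLaw q w i k z else 0)
          - (if z = h.succ then CrowdSeq.condLaw q w i k z else 0) := by
      intro z
      simp only [hX_def]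
      split <;> split <;> ring
    rw [Finset.sum_congr rfl fun z _ => this z, Finset.sum_sub_distrib,
      Finset.sum_ite_eq' Finset.univ k.succ (fun z => CrowdSeq.condLaw q w i k z),
      Finset.sum_ite_eq' Finset.univ h.succ (fun z => CrowdSeq.condLaw q w i k z)]
    simp only [Finset.mem_univ, if_true]
    rw [hcl_succ, hcl_succ, if_pos rfl, if_neg (Ne.symm hkh)]
    simp only [hmi_def]
    ring
  -- variance bound
  have hvar : ∀ (i : ℕ) (k h : Fin L),
      ∑ z : Fin (L + 1), CrowdSeq.condLaw q w i k z * (X k h z - mi i) ^ 2 ≤ 4 := by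
    intro i k h
    have hb0 : 0 ≤ (1 - w i) / ((L : ℝ) - 1) := div_nonneg (by linarith [hw1 i]) (by linarith)
    have hb1 : (1 - w i) / ((L : ℝ) - 1) ≤ 1 := by
      rw [div_le_one (by linarith)]
      linarith [hw0 i]
    have hrw : q * (1 - w i) / ((L : ℝ) - 1) = q * ((1 - w i) / ((L : ℝ) - 1)) := by
      ring
    have hmi0 : -1 ≤ mi i ∧ mi i ≤ 1 := by
      constructor <;>
      · simp only [hmi_def, hrw]
        nlinarith [hw0 i, hw1 i, hb0, hb1]
    have hterm : ∀ z : Fin (L + 1),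
        CrowdSeq.condLaw q w i k z * (X k h z - mi i) ^ 2
          ≤ CrowdSeq.condLaw q w i k z * 4 := by
      intro z
      apply mul_le_mul_of_nonneg_left _ (CrowdAux.condLaw_nonneg hL hq0 hq1 hw0 hw1 i k z)
      have := hXbd k h z
      nlinarith [this.1, this.2, hmi0.1, hmi0.2]
    calc ∑ z : Fin (L + 1), CrowdSeq.condLaw q w i k z * (X k h z - mi i) ^ 2
        ≤ ∑ z : Fin (L + 1), CrowdSeq.condLaw q w i k z * 4 :=
          Finset.sum_le_sum fun z _ => hterm z
      _ = (∑ z : Fin (L + 1), CrowdSeq.condLaw q w i k z) * 4 := by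
          rw [← Finset.sum_mul]
      _ = 4 := by rw [CrowdAux.condLaw_sum_one hL hw0 hw1]; ring
  -- partition lemma
  have key : ∀ (M : ℕ) (k : Fin L) (φ : (Fin M → Fin (L + 1)) → Prop),
      (μ {ω | y j ω = k ∧ φ (fun i : Fin M => Z i j ω)}).toReal
        = pri k * ∑ v ∈ Finset.univ.filter φ,
            ∏ i : Fin M, CrowdSeq.condLaw q w (i : ℕ) k (v i) := by
    intro M k φ
    have hmeas : ∀ v : Fin M → Fin (L + 1),
        MeasurableSet {ω | y j ω = k ∧ (fun i : Fin M => Z i j ω) = v} := by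
      intro v
      have heq : {ω | y j ω = k ∧ (fun i : Fin M => Z i j ω) = v}
          = (y j ⁻¹' {k}) ∩ ⋂ i : Fin M, Z (i : ℕ) j ⁻¹' {v i} := by
        ext ω
        simp [Set.mem_iInter, funext_iff]
      rw [heq]
      exact ((hym j) (measurableSet_singleton _)).inter
        (MeasurableSet.iInter fun i => (hZm (i : ℕ) j) (measurableSet_singleton _))
    have hev : {ω | y j ω = k ∧ φ (fun i : Fin M => Z i j ω)}
        = ⋃ v ∈ Finset.univ.filter φ,
            {ω | y j ω = k ∧ (fun i : Fin M => Z i j ω) = v} := by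
      ext ω
      simp only [Set.mem_setOf_eq, Set.mem_iUnion, Finset.mem_filter, Finset.mem_univ,
        true_and, exists_prop]
      constructor
      · rintro ⟨h1, h2⟩
        exact ⟨fun i => Z (i : ℕ) j ω, h2, h1, rfl⟩
      · rintro ⟨v, hv, h1, h2⟩
        exact ⟨h1, h2 ▸ hv⟩
    have hdisj : (↑(Finset.univ.filter φ) : Set (Fin M → Fin (L + 1))).PairwiseDisjoint
        (fun v => {ω | y j ω = k ∧ (fun i : Fin M => Z i j ω) = v}) := by
      intro v1 _ v2 _ hne
      apply Set.disjoint_left.mpr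
      rintro ω ⟨_, h1⟩ ⟨_, h2⟩
      exact hne (h1 ▸ h2 ▸ rfl)
    have hsingle : ∀ v : Fin M → Fin (L + 1),
        (μ {ω | y j ω = k ∧ (fun i : Fin M => Z i j ω) = v}).toReal
          = pri k * ∏ i : Fin M, CrowdSeq.condLaw q w (i : ℕ) k (v i) := by
      intro v
      have h1 := hlaw j k M (fun n => if hn : n < M then v ⟨n, hn⟩ else 0)
      have hset : {ω | y j ω = k ∧ ∀ i < M, Z i j ω
          = (if hn : i < M then v ⟨i, hn⟩ else 0)}
          = {ω | y j ω = k ∧ (fun i : Fin M => Z i j ω) = v} := by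
        ext ω
        simp only [Set.mem_setOf_eq, funext_iff]
        constructor
        · rintro ⟨hy, hz⟩
          refine ⟨hy, fun i => ?_⟩
          have := hz (i : ℕ) i.isLt
          simpa [i.isLt] using this
        · rintro ⟨hy, hz⟩
          refine ⟨hy, fun i hi => ?_⟩
          have := hz ⟨i, hi⟩
          simpa [hi] using this
      have hprod : (∏ i ∈ Finset.range M, CrowdSeq.condLaw q w i k
            (if hn : i < M then v ⟨i, hn⟩ else 0))
          = ∏ i : Fin M, CrowdSeq.condLaw q w (i : ℕ) k (v i) := by
        rw [← Fin.prod_univ_eq_prod_range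
          (fun n => CrowdSeq.condLaw q w n k (if hn : n < M then v ⟨n, hn⟩ else 0)) M]
        apply Finset.prod_congr rfl
        intro i _
        rw [dif_pos i.isLt]
      rw [← hset, h1, hprod]
    rw [hev, measure_biUnion_finset hdisj (fun v _ => hmeas v), ENNReal.toReal_sum
      (fun v _ => measure_ne_top μ _), Finset.mul_sum]
    exact Finset.sum_congr rfl fun v _ => hsingle v
  -- the bad-vote predicate
  set φ : (M : ℕ) → Fin L → Fin L → (Fin M → Fin (L + 1)) → Prop :=
    fun M k h v => (∑ i : Fin M, if v i = k.succ then (1 : ℝ) else 0)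
      ≤ ∑ i : Fin M, if v i = h.succ then (1 : ℝ) else 0 with hφ_def
  -- Chebyshev bound on the filtered sum
  have cheb : ∀ (M : ℕ), 0 < mM M → ∀ (k h : Fin L), k ≠ h →
      (∑ v ∈ Finset.univ.filter (φ M k h),
        ∏ i : Fin M, CrowdSeq.condLaw q w (i : ℕ) k (v i)) ≤ 4 * M / (mM M) ^ 2 := by
    intro M hm k h hkh
    set p : Fin M → Fin (L + 1) → ℝ := fun i z => CrowdSeq.condLaw q w (i : ℕ) k z with hp_def
    set f : Fin M → Fin (L + 1) → ℝ := fun i z => X k h z - mi (i : ℕ) with hf_def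
    have hp_nonneg : ∀ (v : Fin M → Fin (L + 1)), 0 ≤ ∏ i, p i (v i) :=
      fun v => Finset.prod_nonneg fun i _ =>
        CrowdAux.condLaw_nonneg hL hq0 hq1 hw0 hw1 (i : ℕ) k (v i)
    have hmsum : (∑ i : Fin M, mi (i : ℕ)) = mM M := by
      rw [hmM_def]
      exact Fin.sum_univ_eq_sum_range mi M
    have hstep1 : ∀ v ∈ Finset.univ.filter (φ M k h),
        (∏ i, p i (v i)) ≤ (∏ i, p i (v i)) * ((∑ i, f i (v i)) ^ 2 / (mM M) ^ 2) := by
      intro v hv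
      rw [Finset.mem_filter] at hv
      have hD : (∑ i : Fin M, X k h (v i)) ≤ 0 := by
        have := hv.2
        simp only [hφ_def] at this
        simp only [hX_def, Finset.sum_sub_distrib]
        linarith
      have hfs : (∑ i, f i (v i)) = (∑ i : Fin M, X k h (v i)) - mM M := by
        simp only [hf_def, Finset.sum_sub_distrib, hmsum]
      have hsq : (mM M) ^ 2 ≤ (∑ i, f i (v i)) ^ 2 := by
        rw [hfs]; nlinarith
      have h1 : (1 : ℝ) ≤ (∑ i, f i (v i)) ^ 2 / (mM M) ^ 2 :=
        (one_le_div (by positivity)).mpr hsq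
      calc (∏ i, p i (v i)) = (∏ i, p i (v i)) * 1 := by ring
        _ ≤ (∏ i, p i (v i)) * ((∑ i, f i (v i)) ^ 2 / (mM M) ^ 2) :=
            mul_le_mul_of_nonneg_left h1 (hp_nonneg v)
    have hstep2 : (∑ v ∈ Finset.univ.filter (φ M k h),
          (∏ i, p i (v i)) * ((∑ i, f i (v i)) ^ 2 / (mM M) ^ 2))
        ≤ ∑ v : Fin M → Fin (L + 1),
            (∏ i, p i (v i)) * ((∑ i, f i (v i)) ^ 2 / (mM M) ^ 2) := by
      apply Finset.sum_le_sum_of_subset_of_nonneg (Finset.filter_subset _ _)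
      intro v _ _
      have := hp_nonneg v
      positivity
    have hvar_tot : (∑ v : Fin M → Fin (L + 1), (∏ i, p i (v i)) * (∑ i, f i (v i)) ^ 2)
        ≤ 4 * M := by
      rw [CrowdAux.var_sum p f
        (fun i => CrowdAux.condLaw_sum_one hL hw0 hw1 (i : ℕ) k)
        (fun i => by
          have h1 : (∑ z, p i z * f i z)
              = (∑ z, p i z * X k h z) - (∑ z, p i z) * mi (i : ℕ) := by
            rw [Finset.sum_mul, ← Finset.sum_sub_distrib]
            apply Finset.sum_congr rfl
            intro z _
            simp only [hf_def]
            ring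
          rw [h1, hmean (i : ℕ) k h hkh, CrowdAux.condLaw_sum_one hL hw0 hw1]
          ring)]
      calc (∑ i : Fin M, ∑ z, p i z * f i z ^ 2) ≤ ∑ i : Fin M, (4 : ℝ) :=
            Finset.sum_le_sum fun i _ => hvar (i : ℕ) k h
        _ = 4 * M := by simp [mul_comm]
    calc (∑ v ∈ Finset.univ.filter (φ M k h), ∏ i : Fin M, p i (v i))
        ≤ ∑ v ∈ Finset.univ.filter (φ M k h),
            (∏ i, p i (v i)) * ((∑ i, f i (v i)) ^ 2 / (mM M) ^ 2) :=
          Finset.sum_le_sum hstep1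
      _ ≤ ∑ v : Fin M → Fin (L + 1),
            (∏ i, p i (v i)) * ((∑ i, f i (v i)) ^ 2 / (mM M) ^ 2) := hstep2
      _ = (∑ v : Fin M → Fin (L + 1), (∏ i, p i (v i)) * (∑ i, f i (v i)) ^ 2)
            / (mM M) ^ 2 := by
          rw [Finset.sum_div]
          apply Finset.sum_congr rfl
          intro v _
          ring
      _ ≤ 4 * M / (mM M) ^ 2 := by gcongr
  -- identity for mM
  have hmM_eq : ∀ M : ℕ, mM M = q / ((L : ℝ) - 1) * ((L : ℝ) * A M - M) := by
    intro M
    have hterm : ∀ i : ℕ, mi i = q / ((L : ℝ) - 1) * ((L : ℝ) * w i - 1) := by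
      intro i
      simp only [hmi_def]
      field_simp
      ring
    simp only [hmM_def, hA_def]
    rw [Finset.sum_congr rfl fun i _ => hterm i, ← Finset.mul_sum]
    congr 1
    rw [Finset.sum_sub_distrib, ← Finset.mul_sum, Finset.sum_const, Finset.card_range,
      nsmul_eq_mul, mul_one]
  set ε : ℝ := (wlim - 1 / (L : ℝ)) / 2 with hε_def
  have hε : 0 < ε := by simp only [hε_def]; linarith
  set δ : ℝ := q * (L : ℝ) * ε / ((L : ℝ) - 1) with hδ_def
  have hδ : 0 < δ := by
    apply div_pos _ (by linarith)
    positivity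
  have hev : ∀ᶠ M : ℕ in atTop, (μ {ω | yhatM M j ω ≠ y j ω}).toReal
      ≤ (4 * (L : ℝ) ^ 2 / δ ^ 2) / M := by
    have h1 : ∀ᶠ M : ℕ in atTop, wlim - ε < (M : ℝ)⁻¹ * ∑ i ∈ Finset.range M, w i :=
      hwlim.eventually (eventually_gt_nhds (by linarith))
    filter_upwards [h1, eventually_ge_atTop 1] with M hM hM1
    have hMpos : (0 : ℝ) < M := by exact_mod_cast hM1
    have hAlow : (M : ℝ) * (1 / (L : ℝ) + ε) < A M := by
      have h2 : wlim - ε = 1 / (L : ℝ) + ε := by simp only [hε_def]; ring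
      rw [h2] at hM
      calc (M : ℝ) * (1 / (L : ℝ) + ε) < (M : ℝ) * ((M : ℝ)⁻¹ * ∑ i ∈ Finset.range M, w i) :=
            mul_lt_mul_of_pos_left hM hMpos
        _ = A M := by
            simp only [hA_def]
            field_simp
    have hmlow : δ * M ≤ mM M := by
      rw [hmM_eq M, hδ_def]
      have h2 : (L : ℝ) * ((M : ℝ) * (1 / (L : ℝ) + ε)) = M + (L : ℝ) * M * ε := by
        field_simp
      have h3 : (L : ℝ) * M * ε ≤ (L : ℝ) * A M - M := by nlinarith
      calc q * (L : ℝ) * ε / ((L : ℝ) - 1) * M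
          = q / ((L : ℝ) - 1) * ((L : ℝ) * M * ε) := by ring
        _ ≤ q / ((L : ℝ) - 1) * ((L : ℝ) * A M - M) := by
            apply mul_le_mul_of_nonneg_left h3
            positivity
    have hm : 0 < mM M := lt_of_lt_of_le (by positivity) hmlow
    -- event inclusion
    set E : Fin L × Fin L → Set Ω := fun p =>
      {ω | y j ω = p.1 ∧ φ M p.1 p.2 (fun i : Fin M => Z i j ω)} with hE_def
    set P : Finset (Fin L × Fin L) := Finset.univ.filter (fun p => p.1 ≠ p.2) with hP_def
    have hincl : {ω | yhatM M j ω ≠ y j ω} ⊆ ⋃ p ∈ P, E p := by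
      intro ω hω
      simp only [Set.mem_setOf_eq] at hω
      refine Set.mem_iUnion.mpr ⟨(y j ω, yhatM M j ω), Set.mem_iUnion.mpr ⟨?_, ?_⟩⟩
      · simp only [hP_def, Finset.mem_filter, Finset.mem_univ, true_and]
        exact fun h => hω h.symm
      · have h := hyhat M j ω (y j ω)
        rw [← Fin.sum_univ_eq_sum_range
            (fun i => if Z i j ω = (y j ω).succ then (1 : ℝ) else 0) M,
          ← Fin.sum_univ_eq_sum_range
            (fun i => if Z i j ω = (yhatM M j ω).succ then (1 : ℝ) else 0) M] at h
        simp only [hE_def, Set.mem_setOf_eq, hφ_def]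
        exact ⟨by trivial, h⟩
    have hstep : (μ {ω | yhatM M j ω ≠ y j ω}).toReal ≤ ∑ p ∈ P, (μ (E p)).toReal := by
      have h2 : μ {ω | yhatM M j ω ≠ y j ω} ≤ ∑ p ∈ P, μ (E p) :=
        le_trans (measure_mono hincl) (measure_biUnion_finset_le P E)
      calc (μ {ω | yhatM M j ω ≠ y j ω}).toReal ≤ (∑ p ∈ P, μ (E p)).toReal :=
            ENNReal.toReal_mono (ENNReal.sum_ne_top.mpr fun p _ => measure_ne_top μ _) h2
        _ = ∑ p ∈ P, (μ (E p)).toReal := ENNReal.toReal_sum fun p _ => measure_ne_top μ _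
    have hEbound : ∀ p ∈ P, (μ (E p)).toReal ≤ 4 * M / (mM M) ^ 2 := by
      intro p hp
      rw [hP_def, Finset.mem_filter] at hp
      simp only [hE_def]
      rw [key M p.1 (φ M p.1 p.2)]
      have hsum_nonneg : 0 ≤ ∑ v ∈ Finset.univ.filter (φ M p.1 p.2),
          ∏ i : Fin M, CrowdSeq.condLaw q w (i : ℕ) p.1 (v i) :=
        Finset.sum_nonneg fun v _ => Finset.prod_nonneg fun i _ =>
          CrowdAux.condLaw_nonneg hL hq0 hq1 hw0 hw1 (i : ℕ) p.1 (v i)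
      calc pri p.1 * ∑ v ∈ Finset.univ.filter (φ M p.1 p.2),
            ∏ i : Fin M, CrowdSeq.condLaw q w (i : ℕ) p.1 (v i)
          ≤ 1 * (4 * M / (mM M) ^ 2) :=
            mul_le_mul (hpri_le_one p.1) (cheb M hm p.1 p.2 hp.2) hsum_nonneg (by norm_num)
        _ = 4 * M / (mM M) ^ 2 := one_mul _
    have hmsq : δ ^ 2 * (M : ℝ) ^ 2 ≤ (mM M) ^ 2 := by
      nlinarith [mul_nonneg (sub_nonneg.mpr hmlow)
        (by positivity : (0 : ℝ) ≤ mM M + δ * M)]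
    calc (μ {ω | yhatM M j ω ≠ y j ω}).toReal ≤ ∑ p ∈ P, (μ (E p)).toReal := hstep
      _ ≤ ∑ _p ∈ P, (4 * (M : ℝ) / (mM M) ^ 2) := Finset.sum_le_sum hEbound
      _ = (P.card : ℝ) * (4 * M / (mM M) ^ 2) := by
          rw [Finset.sum_const, nsmul_eq_mul]
      _ ≤ ((L : ℝ) * (L : ℝ)) * (4 * M / (mM M) ^ 2) := by
          apply mul_le_mul_of_nonneg_right _ (by positivity)
          have h2 : P.card ≤ (Finset.univ : Finset (Fin L × Fin L)).card :=
            Finset.card_filter_le _ _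
          have h3 : ((Finset.univ : Finset (Fin L × Fin L)).card : ℝ) = (L : ℝ) * (L : ℝ) := by
            simp [Finset.card_univ]
          calc (P.card : ℝ) ≤ ((Finset.univ : Finset (Fin L × Fin L)).card : ℝ) := by
                exact_mod_cast h2
            _ = (L : ℝ) * (L : ℝ) := h3
      _ ≤ ((L : ℝ) * (L : ℝ)) * (4 * M / (δ ^ 2 * (M : ℝ) ^ 2)) := by
          apply mul_le_mul_of_nonneg_left _ (by positivity)
          gcongr
      _ = (4 * (L : ℝ) ^ 2 / δ ^ 2) / M := by
          field_simp
  have hC : Tendsto (fun M : ℕ => (4 * (L : ℝ) ^ 2 / δ ^ 2) / M) atTop (nhds 0) :=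
    tendsto_const_div_atTop_nhds_zero_nat _
  exact squeeze_zero' (Eventually.of_forall fun M => ENNReal.toReal_nonneg) hev hC

end
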